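/- Let λ ∈ ℂ with λ ≠ 0, let μ > 0, and let h be a step size with 0 < h < 1/(2|λ|). Suppose (y_n)_{n≥0} is a sequence of non-negative real numbers satisfying, for every n ≥ 1, |1 − λh| · y_n = y_{n−1} + h²μ · Σ_{i=0}^{n−1} y_i. Then for every k ∈ ℕ, y_k ≤ exp(2|λ|kh + μk²h²) · y_0. -/

import Mathlib

/-- Induction lemma for zero-stability (Lemma 3.1). -/
theorem stmt_0 (lam : ℂ) (hlam : lam ≠ 0) (μ : ℝ) (hμ : 0 < μ)
    (h : ℝ) (hh : 0 < h) (hh' : h < 1 / (2 * ‖lam‖))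
    (y : ℕ → ℝ) (hy : ∀ n, 0 ≤ y n)
    (hrec : ∀ n : ℕ, 1 ≤ n →
      ‖1 - lam * (h : ℂ)‖ * y n
        = y (n - 1) + h ^ 2 * μ * ∑ i ∈ Finset.range n, y i) :
    ∀ k : ℕ, y k ≤ Real.exp (2 * ‖lam‖ * k * h + μ * k ^ 2 * h ^ 2) * y 0 := by
  set A := ‖lam‖ with hA
  have hA0 : 0 < A := norm_pos_iff.mpr hlam
  have ha : 0 < A * h := mul_pos hA0 hh
  have ha2 : A * h < 1 / 2 := by
    have h2 : h * (2 * A) < 1 := (lt_div_iff₀ (by positivity)).mp hh'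
    nlinarith
  have h1a : (0:ℝ) < 1 - A * h := by linarith
  have hlow : 1 - A * h ≤ ‖1 - lam * (h : ℂ)‖ := by
    have h1 : ‖lam * (h:ℂ)‖ = A * h := by
      rw [norm_mul, Complex.norm_of_nonneg hh.le]
    have := abs_norm_sub_norm_le (1:ℂ) (lam * (h:ℂ))
    rw [norm_one, h1] at this
    calc 1 - A * h ≤ |1 - A * h| := le_abs_self _
      _ ≤ ‖1 - lam * (h:ℂ)‖ := this
  have hexp : 1 ≤ (1 - A * h) * Real.exp (2 * (A * h)) := by
    have := Real.add_one_le_exp (2 * (A * h))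
    nlinarith
  intro k
  induction k using Nat.strong_induction_on with
  | _ k ih =>
    match k with
    | 0 => norm_num
    | n + 1 =>
      set E : ℕ → ℝ := fun m => Real.exp (2 * A * m * h + μ * (m:ℝ) ^ 2 * h ^ 2) with hE
      have hEpos : ∀ m, 0 < E m := fun m => Real.exp_pos _
      have hmono : ∀ i, i ≤ n → E i ≤ E n := by
        intro i hi
        apply Real.exp_le_exp.mpr
        have hin : (i:ℝ) ≤ (n:ℝ) := by exact_mod_cast hi
        have hi0 : (0:ℝ) ≤ (i:ℝ) := Nat.cast_nonneg i
        have hsq : (i:ℝ)^2 ≤ (n:ℝ)^2 := by nlinarith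
        nlinarith [mul_pos hA0 hh, mul_nonneg hμ.le (sq_nonneg h)]
      have hsum : ∑ i ∈ Finset.range (n+1), y i ≤ (n+1 : ℝ) * (E n * y 0) := by
        calc ∑ i ∈ Finset.range (n+1), y i
            ≤ ∑ _i ∈ Finset.range (n+1), E n * y 0 := by
              apply Finset.sum_le_sum
              intro i hi
              have hi' : i ≤ n := Nat.lt_succ_iff.mp (Finset.mem_range.mp hi)
              calc y i ≤ E i * y 0 := ih i (Nat.lt_succ_of_le hi')
                _ ≤ E n * y 0 := mul_le_mul_of_nonneg_right (hmono i hi') (hy 0)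
          _ = (n+1 : ℝ) * (E n * y 0) := by
              rw [Finset.sum_const, Finset.card_range]
              push_cast
              ring
      have hrec' := hrec (n+1) (by omega)
      simp only [Nat.add_sub_cancel] at hrec'
      set c : ℝ := h ^ 2 * μ * (n + 1 : ℝ) with hc
      have hc0 : 0 ≤ c := by positivity
      have step1 : (1 - A * h) * y (n+1) ≤ (1 + c) * (E n * y 0) := by
        have hb : ‖1 - lam * (h:ℂ)‖ * y (n+1)
            ≤ (1 + c) * (E n * y 0) := by
          rw [hrec']
          have hyn : y n ≤ E n * y 0 := ih n (Nat.lt_succ_self n)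
          have hs : h ^ 2 * μ * ∑ i ∈ Finset.range (n+1), y i
              ≤ h ^ 2 * μ * ((n+1 : ℝ) * (E n * y 0)) :=
            mul_le_mul_of_nonneg_left hsum (by positivity)
          rw [hc]; nlinarith
        calc (1 - A * h) * y (n+1)
            ≤ ‖1 - lam * (h:ℂ)‖ * y (n+1) :=
              mul_le_mul_of_nonneg_right hlow (hy _)
          _ ≤ (1 + c) * (E n * y 0) := hb
      have step2 : (1 + c : ℝ) ≤ Real.exp c := by
        have := Real.add_one_le_exp c
        linarith
      have hT : Real.exp (2 * (A * h)) * (Real.exp c * E n)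
          ≤ Real.exp (2 * A * ((n:ℝ)+1) * h + μ * ((n:ℝ)+1) ^ 2 * h ^ 2) := by
        rw [← Real.exp_add, ← Real.exp_add]
        apply Real.exp_le_exp.mpr
        rw [hc]
        nlinarith [Nat.cast_nonneg (α := ℝ) n, sq_nonneg h]
      have hgoal : (1 - A * h) * y (n+1)
          ≤ (1 - A * h) * (Real.exp (2 * A * ((n:ℝ)+1) * h + μ * ((n:ℝ)+1) ^ 2 * h ^ 2) * y 0) := by
        have hP : 0 ≤ E n * y 0 := mul_nonneg (hEpos n).le (hy 0)
        have k1 : (1 + c) * (E n * y 0) ≤ Real.exp c * (E n * y 0) :=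
          mul_le_mul_of_nonneg_right step2 hP
        have k2 : Real.exp c * (E n * y 0)
            ≤ (1 - A * h) * Real.exp (2 * (A * h)) * (Real.exp c * (E n * y 0)) := by
          nlinarith [mul_nonneg (Real.exp_pos c).le hP]
        have k3 : (1 - A * h) * Real.exp (2 * (A * h)) * (Real.exp c * (E n * y 0))
            ≤ (1 - A * h) * (Real.exp (2 * A * ((n:ℝ)+1) * h + μ * ((n:ℝ)+1) ^ 2 * h ^ 2) * y 0) := by
          have := mul_le_mul_of_nonneg_right hT (hy 0)
          nlinarith
        linarith
      have := (mul_le_mul_iff_of_pos_left h1a).mp hgoal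
      push_cast
      exact this
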